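/- Every element of the Thue–Morse set Λ₁ = { n ∈ ℕ : s(n) odd } can be written as a difference of two elements of Λ₀ = { n ∈ ℕ : s(n) even }, where s(n) is the binary digit sum of n. -/

import Mathlib

lemma sds_two_mul (n : ℕ) : (Nat.digits 2 (2 * n)).sum = (Nat.digits 2 n).sum := by
  rcases Nat.eq_zero_or_pos n with h | h
  · simp [h]
  · rw [Nat.digits_def' (by norm_num : (1:ℕ) < 2) (by omega)]
    simp

lemma sds_two_mul_add_one (n : ℕ) :
    (Nat.digits 2 (2 * n + 1)).sum = (Nat.digits 2 n).sum + 1 := by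
  rw [Nat.digits_def' (by norm_num : (1:ℕ) < 2) (by omega)]
  have h1 : (2 * n + 1) % 2 = 1 := by omega
  have h2 : (2 * n + 1) / 2 = n := by omega
  rw [h1, h2]
  simp [Nat.add_comm]

lemma sds_pow_add (n : ℕ) : ∀ d : ℕ, d < 2 ^ n →
    (Nat.digits 2 (2 ^ n + d)).sum = (Nat.digits 2 d).sum + 1 := by
  induction n with
  | zero =>
    intro d hd
    interval_cases d
    simp
  | succ n ih =>
    intro d hd
    rcases Nat.even_or_odd d with ⟨d', rfl⟩ | ⟨d', rfl⟩
    · have h1 : 2 ^ (n + 1) + (d' + d') = 2 * (2 ^ n + d') := by ring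
      have h2 : d' + d' = 2 * d' := by ring
      have h3 : d' < 2 ^ n := by
        have : (2:ℕ) ^ (n+1) = 2 * 2 ^ n := by ring
        omega
      rw [h1, sds_two_mul, ih d' h3, h2, sds_two_mul]
    · have h1 : 2 ^ (n + 1) + (2 * d' + 1) = 2 * (2 ^ n + d') + 1 := by ring
      have h3 : d' < 2 ^ n := by
        have : (2:ℕ) ^ (n+1) = 2 * 2 ^ n := by ring
        omega
      rw [h1, sds_two_mul_add_one, ih d' h3, sds_two_mul_add_one]

lemma sds_pow_sub_one (n : ℕ) : (Nat.digits 2 (2 ^ n - 1)).sum = n := by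
  induction n with
  | zero => simp
  | succ n ih =>
    have h1 : (1:ℕ) ≤ 2 ^ n := Nat.one_le_two_pow
    have h2 : (2:ℕ) ^ (n + 1) = 2 * 2 ^ n := by ring
    have h3 : 2 ^ (n + 1) - 1 = 2 * (2 ^ n - 1) + 1 := by omega
    rw [h3, sds_two_mul_add_one, ih]

/-- Every element of `Λ₁ = {n : s(n) odd}` is a difference of two elements of
`Λ₀ = {n : s(n) even}`, where `s` is the binary digit sum. -/
theorem stmt_7 (a : ℕ) (ha : (Nat.digits 2 a).sum % 2 = 1) :
    ∃ b c : ℕ, (Nat.digits 2 b).sum % 2 = 0 ∧ (Nat.digits 2 c).sum % 2 = 0 ∧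
      c ≤ b ∧ (a : ℤ) = (b : ℤ) - (c : ℤ) := by
  induction a using Nat.strong_induction_on with
  | _ a ih =>
    rcases Nat.even_or_odd a with ⟨m, rfl⟩ | ⟨m, rfl⟩
    · -- even case: a = m + m = 2 * m
      have hm2 : m + m = 2 * m := by ring
      have hm0 : m ≠ 0 := by
        rintro rfl
        simp at ha
      have hlt : m < m + m := by omega
      have ham : (Nat.digits 2 m).sum % 2 = 1 := by
        rw [hm2, sds_two_mul] at ha
        exact ha
      obtain ⟨b, c, hb, hc, hcb, heq⟩ := ih m hlt ham
      refine ⟨2 * b, 2 * c, ?_, ?_, by omega, ?_⟩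
      · rw [sds_two_mul]; exact hb
      · rw [sds_two_mul]; exact hc
      · push_cast
        linarith
    · -- odd case: a = 2 * m + 1
      set k : ℕ := 2 * m + 3 with hk
      have hk1 : (1:ℕ) ≤ 2 ^ k := Nat.one_le_two_pow
      have hklt : 2 * m + 1 < 2 ^ k := by
        calc 2 * m + 1 < 2 * m + 3 := by omega
          _ < 2 ^ (2 * m + 3) := Nat.lt_two_pow_self
      refine ⟨2 ^ (k + 1) + (2 ^ k + 2 * m), 2 ^ (k + 1) + (2 ^ k - 1), ?_, ?_, ?_, ?_⟩
      · -- digit sum of b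
        have hd : 2 ^ k + 2 * m < 2 ^ (k + 1) := by
          have : (2:ℕ) ^ (k+1) = 2 * 2 ^ k := by ring
          omega
        rw [sds_pow_add (k + 1) _ hd, sds_pow_add k (2 * m) (by omega), sds_two_mul]
        have hsm : (Nat.digits 2 m).sum % 2 = 0 := by
          rw [sds_two_mul_add_one] at ha
          omega
        omega
      · -- digit sum of c
        have hd : 2 ^ k - 1 < 2 ^ (k + 1) := by
          have : (2:ℕ) ^ (k+1) = 2 * 2 ^ k := by ring
          omega
        rw [sds_pow_add (k + 1) _ hd, sds_pow_sub_one]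
        omega
      · omega
      · have : (2 ^ (k + 1) + (2 ^ k + 2 * m)) = (2 * m + 1) + (2 ^ (k + 1) + (2 ^ k - 1)) := by
          omega
        push_cast [this]
        ring
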